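/- Let 0 < p ≤ 1 and let β = (β_j)_{j≥1} be a sequence of nonnegative reals with ∑_j β_j^p =: B^p < ∞. Assume additionally that β is nonincreasing. Then for every integer s ≥ 1, the tail sum satisfies ∑_{j ≥ s+1} β_j ≤ min(p/(1−p), 1) · B · s^{−(1/p − 1)} (when p < 1; for p = 1 the bound reads ∑_{j≥s+1} β_j ≤ B). -/

import Mathlib

open Real Filter Finset Topology

private lemma tele_key {α : ℝ} (hα : 1 ≤ α) {n : ℕ} (hn : 1 ≤ n) :
    α * ((n : ℝ) + 1) ^ (-(α + 1)) ≤ (n : ℝ) ^ (-α) - ((n : ℝ) + 1) ^ (-α) := by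
  have hn0 : (0 : ℝ) < (n : ℝ) := by exact_mod_cast Nat.lt_of_lt_of_le Nat.one_pos hn
  have hn1 : (0 : ℝ) < (n : ℝ) + 1 := by positivity
  -- Bernoulli
  have hbern : 1 + α * (1 / (n : ℝ)) ≤ (1 + 1 / (n : ℝ)) ^ α :=
    one_add_mul_self_le_rpow_one_add (le_trans (by norm_num : (-1:ℝ) ≤ 0) (by positivity)) hα
  have h1 : 1 + α / ((n : ℝ) + 1) ≤ 1 + α * (1 / (n : ℝ)) := by
    have : α / ((n : ℝ) + 1) ≤ α / (n : ℝ) :=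
      div_le_div_of_nonneg_left (by linarith) hn0 (by linarith)
    rw [mul_one_div]; linarith
  have hquot : (1 + 1 / (n : ℝ)) = ((n : ℝ) + 1) / (n : ℝ) := by field_simp
  -- n^(-α) = (n+1)^(-α) * ((n+1)/n)^α
  have h2 : (n : ℝ) ^ (-α) = ((n : ℝ) + 1) ^ (-α) * (((n : ℝ) + 1) / (n : ℝ)) ^ α := by
    rw [Real.div_rpow hn1.le hn0.le, Real.rpow_neg hn1.le, Real.rpow_neg hn0.le]
    field_simp
  have h3 : ((n : ℝ) + 1) ^ (-(α + 1)) = ((n : ℝ) + 1) ^ (-α) * (((n : ℝ) + 1))⁻¹ := by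
    rw [show -(α + 1) = -α + (-1) by ring, Real.rpow_add hn1, Real.rpow_neg_one]
  have hpos : (0 : ℝ) < ((n : ℝ) + 1) ^ (-α) := Real.rpow_pos_of_pos hn1 _
  rw [h2, h3]
  have h4 : (1 : ℝ) + α / ((n : ℝ) + 1) ≤ (((n : ℝ) + 1) / (n : ℝ)) ^ α := by
    rw [← hquot]; exact h1.trans hbern
  have := mul_le_mul_of_nonneg_left h4 hpos.le
  have hrw : ((n : ℝ) + 1) ^ (-α) * (1 + α / ((n : ℝ) + 1))
      = ((n : ℝ) + 1) ^ (-α) + α * (((n : ℝ) + 1) ^ (-α) * ((n : ℝ) + 1)⁻¹) := by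
    field_simp
  linarith [hrw ▸ this]

/-- Tail-sum bound for nonincreasing `ℓ^p` sequences (`β j` stands for `β_{j+1}`). -/
theorem stmt15 (p : ℝ) (hp0 : 0 < p) (hp1 : p ≤ 1)
    (β : ℕ → ℝ) (hβ : ∀ j, 0 ≤ β j) (hmono : Antitone β)
    (hsum : Summable fun j => β j ^ p)
    (B : ℝ) (hB : B = (∑' j : ℕ, β j ^ p) ^ (1 / p)) :
    ∀ s : ℕ, 1 ≤ s →
      ((p < 1 →
        ∑' j : ℕ, β (s + j) ≤ min (p / (1 - p)) 1 * B * (s : ℝ) ^ (-(1 / p - 1))) ∧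
       (p = 1 → ∑' j : ℕ, β (s + j) ≤ B)) := by
  intro s hs
  have hs0 : (0 : ℝ) < (s : ℝ) := by exact_mod_cast hs
  have hs1 : (1 : ℝ) ≤ (s : ℝ) := by exact_mod_cast hs
  set T := ∑' j : ℕ, β j ^ p with hT
  have hTnn : 0 ≤ T := tsum_nonneg fun j => Real.rpow_nonneg (hβ j) p
  have hBnn : 0 ≤ B := hB ▸ Real.rpow_nonneg hTnn _
  have hBp : B ^ p = T := by
    rw [hB, ← Real.rpow_mul hTnn, one_div_mul_cancel hp0.ne', Real.rpow_one]
  have hinj : Function.Injective (fun j : ℕ => s + j) := fun a b h => by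
    simpa using h
  -- (k+1) * β k ^ p ≤ T
  have hkey : ∀ k : ℕ, ((k : ℝ) + 1) * β k ^ p ≤ T := by
    intro k
    have h1 : ∑ i ∈ Finset.range (k + 1), β k ^ p
        ≤ ∑ i ∈ Finset.range (k + 1), β i ^ p := by
      refine Finset.sum_le_sum fun i hi => ?_
      exact Real.rpow_le_rpow (hβ k) (hmono (Nat.lt_succ_iff.mp (Finset.mem_range.mp hi))) hp0.le
    have h2 : ∑ i ∈ Finset.range (k + 1), β i ^ p ≤ T :=
      Summable.sum_le_tsum _ (fun i _ => Real.rpow_nonneg (hβ i) p) hsum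
    have h3 := h1.trans h2
    rw [Finset.sum_const, Finset.card_range, nsmul_eq_mul] at h3
    push_cast at h3
    linarith
  -- β k ≤ B * (k+1)^(-(1/p))
  have hβk : ∀ k : ℕ, β k ≤ B * ((k : ℝ) + 1) ^ (-(1 / p)) := by
    intro k
    have hk1 : (0 : ℝ) < (k : ℝ) + 1 := by positivity
    have h1 : β k ^ p ≤ T * ((k : ℝ) + 1)⁻¹ := by
      rw [← div_eq_mul_inv, le_div_iff₀ hk1]; linarith [hkey k]
    have h2 : (β k ^ p) ^ (1 / p) = β k := by
      rw [← Real.rpow_mul (hβ k), mul_one_div_cancel hp0.ne', Real.rpow_one]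
    rw [← h2]
    calc (β k ^ p) ^ (1 / p) ≤ (T * ((k : ℝ) + 1)⁻¹) ^ (1 / p) :=
          Real.rpow_le_rpow (Real.rpow_nonneg (hβ k) p) h1 (by positivity)
      _ = B * ((k : ℝ) + 1) ^ (-(1 / p)) := by
          rw [Real.mul_rpow hTnn (by positivity), ← hB,
            Real.inv_rpow hk1.le, ← Real.rpow_neg hk1.le]
  constructor
  · -- case p < 1
    intro hplt
    have h1p : 0 < 1 - p := by linarith
    set α : ℝ := 1 / p - 1 with hαdef
    have hα0 : 0 < α := by
      have : 1 < 1 / p := by rw [lt_div_iff₀ hp0]; linarith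
      simp only [hαdef]; linarith
    by_cases hmin : 1 ≤ p / (1 - p)
    · -- min = 1 ; use the β_s^{1-p} proof
      rw [min_eq_right hmin]
      have hsum' : Summable fun j => β (s + j) ^ p :=
        hsum.comp_injective hinj
      have hle : ∀ j, β (s + j) ≤ β s ^ (1 - p) * β (s + j) ^ p := by
        intro j
        have heq : β (s + j) = β (s + j) ^ (1 - p) * β (s + j) ^ p := by
          rw [← Real.rpow_add' (hβ _) (by norm_num : (1 - p) + p ≠ 0)]
          norm_num
        conv_lhs => rw [heq]
        exact mul_le_mul_of_nonneg_right
          (Real.rpow_le_rpow (hβ _) (hmono (Nat.le_add_right s j)) h1p.le)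
          (Real.rpow_nonneg (hβ _) p)
      have hsumtail : Summable fun j => β (s + j) :=
        Summable.of_nonneg_of_le (fun j => hβ _) hle (hsum'.mul_left _)
      have hTtail : ∑' j, β (s + j) ^ p ≤ T :=
        Summable.tsum_le_tsum_of_inj _ hinj (fun c _ => Real.rpow_nonneg (hβ c) p)
          (fun j => le_rfl) hsum' hsum
      have step1 : ∑' j, β (s + j) ≤ β s ^ (1 - p) * T := by
        calc ∑' j, β (s + j) ≤ ∑' j, β s ^ (1 - p) * β (s + j) ^ p :=
              Summable.tsum_le_tsum hle hsumtail (hsum'.mul_left _)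
          _ = β s ^ (1 - p) * ∑' j, β (s + j) ^ p := Summable.tsum_mul_left _ hsum'
          _ ≤ β s ^ (1 - p) * T := by
              exact mul_le_mul_of_nonneg_left hTtail (Real.rpow_nonneg (hβ s) _)
      -- β s ≤ B * s^(-(1/p))
      have hβs : β s ≤ B * (s : ℝ) ^ (-(1 / p)) := by
        refine (hβk s).trans ?_
        refine mul_le_mul_of_nonneg_left ?_ hBnn
        exact Real.rpow_le_rpow_of_nonpos hs0 (by linarith) (neg_nonpos.mpr (by positivity))
      have hβsp : β s ^ (1 - p) ≤ (B * (s : ℝ) ^ (-(1 / p))) ^ (1 - p) :=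
        Real.rpow_le_rpow (hβ s) hβs h1p.le
      have hcalc : (B * (s : ℝ) ^ (-(1 / p))) ^ (1 - p) * T = B * (s : ℝ) ^ (-α) := by
        rw [Real.mul_rpow hBnn (Real.rpow_nonneg hs0.le _), ← Real.rpow_mul hs0.le,
          show (-(1 / p)) * (1 - p) = -α by simp only [hαdef]; field_simp,
          ← hBp, mul_right_comm, ← Real.rpow_add' hBnn (by norm_num : (1 - p) + p ≠ 0),
          show (1 - p) + p = (1:ℝ) by ring, Real.rpow_one]
      calc ∑' j, β (s + j) ≤ β s ^ (1 - p) * T := step1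
        _ ≤ (B * (s : ℝ) ^ (-(1 / p))) ^ (1 - p) * T :=
            mul_le_mul_of_nonneg_right hβsp hTnn
        _ = B * (s : ℝ) ^ (-α) := hcalc
        _ = 1 * B * (s : ℝ) ^ (-α) := by ring
    · -- min = p/(1-p), and α ≥ 1
      push_neg at hmin
      rw [min_eq_left hmin.le]
      have hα1 : 1 ≤ α := by
        have hp2 : p < 1 - p := by
          have := (div_lt_one h1p).mp hmin; linarith
        have h2p : 2 ≤ 1 / p := by rw [le_div_iff₀ hp0]; linarith
        simp only [hαdef]; linarith
      set f : ℕ → ℝ := fun n => (n : ℝ) ^ (-α) with hf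
      -- telescoping sum
      have hfpos : ∀ n : ℕ, 1 ≤ n → 0 < f n := fun n hn =>
        Real.rpow_pos_of_pos (by exact_mod_cast hn) _
      have hfanti : ∀ j : ℕ, f (s + j + 1) ≤ f (s + j) := by
        intro j
        refine Real.rpow_le_rpow_of_nonpos ?_ ?_ (by linarith)
        · exact_mod_cast Nat.lt_of_lt_of_le Nat.zero_lt_one (hs.trans (Nat.le_add_right s j))
        · push_cast; linarith
      have htele : HasSum (fun j => f (s + j) - f (s + j + 1)) (f s) := by
        rw [hasSum_iff_tendsto_nat_of_nonneg (fun j => sub_nonneg.mpr (hfanti j))]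
        have hpart : ∀ n : ℕ, ∑ j ∈ Finset.range n, (f (s + j) - f (s + j + 1))
            = f s - f (s + n) := by
          intro n
          simpa [add_assoc] using Finset.sum_range_sub' (fun j => f (s + j)) n
        simp only [hpart]
        have htend : Tendsto (fun n : ℕ => f (s + n)) atTop (𝓝 0) := by
          have h1 : Tendsto (fun n : ℕ => ((s + n : ℕ) : ℝ)) atTop atTop := by
            refine tendsto_natCast_atTop_atTop.comp ?_
            exact tendsto_atTop_mono (fun n => Nat.le_add_left n s) tendsto_id
          have := (tendsto_rpow_neg_atTop hα0).comp h1
          simpa [hf, Function.comp_def] using this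
        simpa using tendsto_const_nhds.sub htend
      -- key comparison
      have hcomp : ∀ j : ℕ, α * (((s + j : ℕ) : ℝ) + 1) ^ (-(1 / p))
          ≤ f (s + j) - f (s + j + 1) := by
        intro j
        have := tele_key hα1 (hs.trans (Nat.le_add_right s j))
        have hexp : -(α + 1) = -(1 / p) := by simp only [hαdef]; ring
        rw [hexp] at this
        simpa [hf, Nat.cast_add, Nat.cast_one] using this
      have hhnn : ∀ j : ℕ, 0 ≤ (((s + j : ℕ) : ℝ) + 1) ^ (-(1 / p)) :=
        fun j => Real.rpow_nonneg (by positivity) _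
      have hsumh : Summable fun j => (((s + j : ℕ) : ℝ) + 1) ^ (-(1 / p)) := by
        refine Summable.of_nonneg_of_le hhnn (fun j => ?_)
          ((htele.summable).div_const α)
        rw [le_div_iff₀ hα0, mul_comm]
        exact hcomp j
      have hβle : ∀ j, β (s + j) ≤ B * (((s + j : ℕ) : ℝ) + 1) ^ (-(1 / p)) :=
        fun j => hβk (s + j)
      have hsumtail : Summable fun j => β (s + j) :=
        Summable.of_nonneg_of_le (fun j => hβ _) hβle (hsumh.mul_left B)
      have hsumB : ∑' j : ℕ, β (s + j)
          ≤ B * ∑' j : ℕ, (((s + j : ℕ) : ℝ) + 1) ^ (-(1 / p)) := by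
        rw [← Summable.tsum_mul_left B hsumh]
        exact Summable.tsum_le_tsum hβle hsumtail (hsumh.mul_left B)
      have hsumle : ∑' j : ℕ, (((s + j : ℕ) : ℝ) + 1) ^ (-(1 / p)) ≤ f s / α := by
        rw [le_div_iff₀ hα0, mul_comm]
        rw [← Summable.tsum_mul_left α hsumh]
        calc ∑' j, α * (((s + j : ℕ) : ℝ) + 1) ^ (-(1 / p))
            ≤ ∑' j, (f (s + j) - f (s + j + 1)) :=
              Summable.tsum_le_tsum hcomp (hsumh.mul_left α) htele.summable
          _ = f s := htele.tsum_eq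
      have hinvα : f s / α = p / (1 - p) * (s : ℝ) ^ (-α) := by
        have hpα : p / (1 - p) * α = 1 := by
          rw [hαdef]; field_simp
        simp only [hf]
        rw [div_eq_iff hα0.ne', mul_assoc, mul_comm ((s:ℝ) ^ (-α)) α, ← mul_assoc, hpα,
          one_mul]
      calc ∑' j : ℕ, β (s + j)
          ≤ B * ∑' j : ℕ, (((s + j : ℕ) : ℝ) + 1) ^ (-(1 / p)) := hsumB
        _ ≤ B * (f s / α) := mul_le_mul_of_nonneg_left hsumle hBnn
        _ = p / (1 - p) * B * (s : ℝ) ^ (-α) := by rw [hinvα]; ring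
  · -- case p = 1
    intro hp
    subst hp
    simp only [Real.rpow_one] at hsum hT
    have hB1 : B = T := by rw [hB]; norm_num
    have hsum' : Summable fun j => β (s + j) := by
      have := hsum.comp_injective hinj
      simpa [Function.comp_def, Real.rpow_one] using this
    rw [hB1, hT]
    refine Summable.tsum_le_tsum_of_inj _ hinj (fun c _ => by simpa using hβ c)
      (fun j => by simp) hsum' (by simpa using hsum)
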